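/- Every chain complex over the field with two elements admits a lift to a chain complex over the integers; that is, given boundary maps ∂_j : A_j → A_{j-1} over F_2 satisfying ∂_{j-1} ∘ ∂_j = 0, there exist integer matrices ∂̃_j whose entries reduce mod 2 to those of ∂_j and which satisfy ∂̃_{j-1} ∘ ∂̃_j = 0 over ℤ. -/

import Mathlib

open Matrix Set Submodule

noncomputable section

local notation "F" => ZMod 2

private lemma castval (a : ZMod 2) : ((a.val : ℤ) : ZMod 2) = a := by
  push_cast
  simp [ZMod.natCast_val, ZMod.cast_id]

/-- Invertible matrices over `ZMod 2` lift to invertible integer matrices. -/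
private lemma exists_int_lift {n : ℕ} (C : Matrix (Fin n) (Fin n) F) (hC : C.det ≠ 0) :
    ∃ Ct : Matrix (Fin n) (Fin n) ℤ,
      Ct.map (Int.cast : ℤ → F) = C ∧ IsUnit Ct.det := by
  haveI : Fact (Nat.Prime 2) := ⟨Nat.prime_two⟩
  apply Matrix.diagonal_transvection_induction_of_det_ne_zero _ C hC
  · intro Dd hDd
    refine ⟨Matrix.diagonal (fun v => ((Dd v).val : ℤ)), ?_, ?_⟩
    · ext i j
      by_cases h : i = j <;> simp [Matrix.diagonal, h, castval]
    · rw [Matrix.det_diagonal] at hDd ⊢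
      apply IsUnit.of_mul_eq_one 1
      rw [mul_one]
      rw [Finset.prod_eq_one]
      intro v _
      have h1 : Dd v ≠ 0 := by
        intro h0
        exact hDd (Finset.prod_eq_zero (Finset.mem_univ v) h0)
      have h2 : (Dd v).val = 1 := by
        have := (Dd v).val_lt
        have h3 : (Dd v).val ≠ 0 := fun hh => h1 ((ZMod.val_eq_zero _).mp hh)
        omega
      rw [h2]; norm_num
  · intro t
    refine ⟨Matrix.transvection t.i t.j ((t.c).val : ℤ), ?_, ?_⟩
    · have ht : t.toMatrix = Matrix.transvection t.i t.j t.c := by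
        cases t; rfl
      rw [ht]
      ext a b
      simp only [Matrix.transvection, Matrix.map_apply, Matrix.add_apply, Matrix.one_apply,
        Matrix.single, Matrix.of_apply]
      split_ifs <;> push_cast <;> simp [castval]
    · rw [Matrix.det_transvection_of_ne _ _ t.hij]; exact isUnit_one
  · rintro A B _ _ ⟨At, hA, hAu⟩ ⟨Bt, hB, hBu⟩
    refine ⟨At * Bt, ?_, ?_⟩
    · rw [show (Int.cast : ℤ → F) = ⇑(Int.castRingHom F) from rfl] at hA hB ⊢
      rw [Matrix.map_mul, hA, hB]
    · rw [Matrix.det_mul]; exact hAu.mul hBu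

/-- Adapted basis lemma: given `M * M' = 0` over `F₂`, there is an invertible
change of basis `C` on the middle space and a set `S` of indices such that the
columns of `M * C` indexed by `S` vanish and the rows of `C⁻¹ * M'` outside `S`
vanish. -/
private lemma exists_adapted {m n p : ℕ} (M : Matrix (Fin m) (Fin n) F)
    (M' : Matrix (Fin n) (Fin p) F) (h : M * M' = 0) :
    ∃ (C : Matrix (Fin n) (Fin n) F) (S : Set (Fin n)), IsUnit C.det ∧
      (∀ l ∈ S, ∀ i, (M * C) i l = 0) ∧
      (∀ i ∉ S, ∀ k, (C⁻¹ * M') i k = 0) := by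
  haveI : Fact (Nat.Prime 2) := ⟨Nat.prime_two⟩
  classical
  set V := Fin n → F
  set U : Submodule F V := LinearMap.ker M.mulVecLin with hU
  set W : Submodule F V := LinearMap.range M'.mulVecLin with hW
  have hWU : W ≤ U := by
    rintro _ ⟨x, rfl⟩
    show M.mulVecLin (M' *ᵥ x) = 0
    rw [Matrix.mulVecLin_apply, Matrix.mulVec_mulVec, h, Matrix.zero_mulVec]
  obtain ⟨s, hsW, hspan, hsli⟩ := exists_linearIndependent F (W : Set V)
  have hsU : s ⊆ (U : Set V) := hsW.trans hWU
  obtain ⟨t, htU, hst, hUspan, htli⟩ := exists_linearIndepOn_id_extension hsli hsU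
  let T := htli.extend (Set.subset_univ t)
  have htT : t ⊆ T := htli.subset_extend _
  let b0 : Module.Basis T F V := Module.Basis.extend htli
  haveI : Fintype T := FiniteDimensional.fintypeBasisIndex b0
  have hcard : Fintype.card T = n := by
    have h1 := Module.finrank_eq_card_basis b0
    have h2 : Module.finrank F V = n := by simp [V]
    omega
  let e : T ≃ Fin n := Fintype.equivFinOfCardEq hcard
  let b : Module.Basis (Fin n) F V := b0.reindex e
  have hb_apply : ∀ l : Fin n, b l = ((e.symm l : T) : V) := by
    intro l
    simp only [b, b0, Module.Basis.reindex_apply]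
    exact Module.Basis.extend_apply_self htli _
  let S : Set (Fin n) := {l | (b l : V) ∈ t}
  let pb := Pi.basisFun F (Fin n)
  let C : Matrix (Fin n) (Fin n) F := pb.toMatrix ⇑b
  haveI : Invertible C := pb.invertibleToMatrix b
  have hCdet : IsUnit C.det := Matrix.isUnit_det_of_invertible C
  have hCinv : C⁻¹ = b.toMatrix ⇑pb := Matrix.inv_eq_right_inv (Module.Basis.toMatrix_mul_toMatrix_flip _ _)
  have hCcol : ∀ l, (fun j => C j l) = b l := by
    intro l
    ext j
    simp [C, Module.Basis.toMatrix_apply, pb]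
  refine ⟨C, S, hCdet, ?_, ?_⟩
  · intro l hl i
    have hmem : b l ∈ U := htU hl
    have : M.mulVec (b l) = 0 := hmem
    have hcol : (fun j => C j l) = b l := hCcol l
    rw [Matrix.mul_apply]
    calc (∑ j, M i j * C j l) = M.mulVec (fun j => C j l) i := by rw [Matrix.mulVec]; rfl
    _ = 0 := by rw [hcol, this]; rfl
  · intro i hi k
    -- column k of M' lies in W ⊆ span of basis vectors indexed by S
    have hcolW : (fun j => M' j k) ∈ W := by
      refine ⟨Pi.single k 1, ?_⟩
      show M' *ᵥ Pi.single k 1 = fun j => M' j k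
      ext j; simp [Matrix.mulVec_single]
    have htS : t ⊆ b '' S := by
      intro x hx
      have hxT : x ∈ T := htT hx
      refine ⟨e ⟨x, hxT⟩, ?_, ?_⟩
      · show (b (e ⟨x, hxT⟩) : V) ∈ t
        rw [hb_apply]
        simpa using hx
      · rw [hb_apply]
        simp
    have hspanS : (W : Set V) ⊆ (Submodule.span F (b '' S) : Set V) := by
      have h1 : W ≤ Submodule.span F s := by
        rw [hspan, Submodule.span_eq]
      have h2 : Submodule.span F s ≤ Submodule.span F (b '' S) :=
        Submodule.span_mono (hst.trans htS)
      exact h1.trans h2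
    have hmem : (fun j => M' j k) ∈ Submodule.span F (b '' S) := hspanS hcolW
    have hsupp := Module.Basis.repr_support_subset_of_mem_span b S hmem
    have hrep : (C⁻¹ *ᵥ fun j => M' j k) = ⇑(b.repr (fun j => M' j k)) := by
      rw [hCinv]
      have := Module.Basis.toMatrix_mulVec_repr pb b (fun j => M' j k)
      have hpb : ⇑(pb.repr fun j => M' j k) = fun j => M' j k := by
        ext j; simp [pb]
      rw [hpb] at this
      rw [this]
    have hzero : b.repr (fun j => M' j k) i = 0 := by
      by_contra hne
      exact hi (hsupp (Finsupp.mem_support_iff.mpr hne))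
    calc (C⁻¹ * M') i k = (C⁻¹ *ᵥ fun j => M' j k) i := by
          rw [Matrix.mul_apply, Matrix.mulVec]; rfl
    _ = 0 := by rw [hrep]; exact hzero

private lemma map_nonsing_inv {n : ℕ} (A : Matrix (Fin n) (Fin n) ℤ) (hA : IsUnit A.det) :
    (A⁻¹).map (Int.cast : ℤ → F) = (A.map (Int.cast : ℤ → F))⁻¹ := by
  have h1 : A.map (Int.cast : ℤ → F) * (A⁻¹).map (Int.cast : ℤ → F) = 1 := by
    rw [show (Int.cast : ℤ → F) = ⇑(Int.castRingHom F) from rfl, ← Matrix.map_mul,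
      Matrix.mul_nonsing_inv A hA]
    exact Matrix.map_one _ (by simp) (by simp)
  exact (Matrix.inv_eq_right_inv h1).symm

end

/-- Every chain complex over `F₂` admits a lift to a chain complex over `ℤ`:
there exist integer matrices, entrywise congruent mod 2 to the original boundary
matrices, whose successive composites vanish over `ℤ`. -/
theorem stmt_0 (d : ℕ → ℕ)
    (D : ∀ j : ℕ, Matrix (Fin (d j)) (Fin (d (j + 1))) (ZMod 2))
    (hD : ∀ j, D j * D (j + 1) = 0) :
    ∃ Dt : ∀ j : ℕ, Matrix (Fin (d j)) (Fin (d (j + 1))) ℤ,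
      (∀ j i k, ((Dt j i k : ℤ) : ZMod 2) = D j i k) ∧
      (∀ j, Dt j * Dt (j + 1) = 0) := by
  haveI : Fact (Nat.Prime 2) := ⟨Nat.prime_two⟩
  classical
  choose C S hCdet ha hb using fun j => exists_adapted (D j) (D (j + 1)) (hD j)
  let B : ∀ j : ℕ, Matrix (Fin (d j)) (Fin (d j)) (ZMod 2) := fun j =>
    match j with
    | 0 => 1
    | (j + 1) => C j
  have hB1 : ∀ j, B (j + 1) = C j := fun j => rfl
  have hBdet : ∀ j, IsUnit (B j).det := by
    intro j
    cases j with
    | zero => simp [B]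
    | succ j => exact hCdet j
  choose Bt hBt hBtdet using fun j =>
    exists_int_lift (B j) (isUnit_iff_ne_zero.mp (hBdet j))
  let N : ∀ j : ℕ, Matrix (Fin (d j)) (Fin (d (j + 1))) (ZMod 2) := fun j =>
    (B j)⁻¹ * D j * B (j + 1)
  let Nt : ∀ j : ℕ, Matrix (Fin (d j)) (Fin (d (j + 1))) ℤ := fun j =>
    (N j).map (fun a => (a.val : ℤ))
  have hNt : ∀ j, (Nt j).map (Int.cast : ℤ → ZMod 2) = N j := by
    intro j
    ext i k
    simp [Nt, Matrix.map_apply, castval]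
  refine ⟨fun j => Bt j * Nt j * (Bt (j + 1))⁻¹, ?_, ?_⟩
  · intro j i k
    have hmap : (Bt j * Nt j * (Bt (j + 1))⁻¹).map (Int.cast : ℤ → ZMod 2) = D j := by
      rw [show (Int.cast : ℤ → ZMod 2) = ⇑(Int.castRingHom (ZMod 2)) from rfl, Matrix.map_mul,
        Matrix.map_mul]
      rw [show ⇑(Int.castRingHom (ZMod 2)) = (Int.cast : ℤ → ZMod 2) from rfl]
      rw [hBt j, hNt j, map_nonsing_inv _ (hBtdet (j + 1)), hBt (j + 1)]
      show B j * ((B j)⁻¹ * D j * B (j + 1)) * (B (j + 1))⁻¹ = D j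
      rw [← Matrix.mul_assoc, ← Matrix.mul_assoc, Matrix.mul_nonsing_inv _ (hBdet j),
        Matrix.one_mul, Matrix.mul_assoc, Matrix.mul_nonsing_inv _ (hBdet (j + 1)),
        Matrix.mul_one]
    calc ((Bt j * Nt j * (Bt (j + 1))⁻¹) i k : ZMod 2)
        = (Bt j * Nt j * (Bt (j + 1))⁻¹).map (Int.cast : ℤ → ZMod 2) i k := rfl
      _ = D j i k := by rw [hmap]
  · intro j
    have key : Nt j * Nt (j + 1) = 0 := by
      ext i k
      rw [Matrix.mul_apply]
      apply Finset.sum_eq_zero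
      intro l _
      by_cases hl : l ∈ S j
      · have hN : N j i l = 0 := by
          show ((B j)⁻¹ * D j * B (j + 1)) i l = 0
          rw [hB1 j, Matrix.mul_assoc, Matrix.mul_apply]
          apply Finset.sum_eq_zero
          intro a _
          rw [ha j l hl a, mul_zero]
        simp [Nt, Matrix.map_apply, hN]
      · have hN : N (j + 1) l k = 0 := by
          show ((B (j + 1))⁻¹ * D (j + 1) * B (j + 2)) l k = 0
          rw [hB1 j, Matrix.mul_apply]
          apply Finset.sum_eq_zero
          intro a _
          rw [hb j l hl a, zero_mul]
        simp [Nt, Matrix.map_apply, hN]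
    have hc : (Bt (j + 1))⁻¹ * Bt (j + 1) = 1 := Matrix.nonsing_inv_mul _ (hBtdet (j + 1))
    calc (Bt j * Nt j * (Bt (j + 1))⁻¹) * (Bt (j + 1) * Nt (j + 1) * (Bt (j + 2))⁻¹)
        = Bt j * (Nt j * ((Bt (j + 1))⁻¹ * (Bt (j + 1) * (Nt (j + 1) * (Bt (j + 2))⁻¹)))) := by
          simp only [Matrix.mul_assoc]
      _ = Bt j * (Nt j * (Nt (j + 1) * (Bt (j + 2))⁻¹)) := by
          rw [← Matrix.mul_assoc (Bt (j + 1))⁻¹, hc, Matrix.one_mul]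
      _ = Bt j * ((Nt j * Nt (j + 1)) * (Bt (j + 2))⁻¹) := by rw [Matrix.mul_assoc]
      _ = 0 := by rw [key, Matrix.zero_mul, Matrix.mul_zero]
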